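/- arXiv:2505.12596 — 2 statements merged into one kernel-verified Lean document; each statement's English description precedes it below -/
import Mathlib

section
/- Let ν₁ = e^{iψ}, ν₂ = e^{-iψ} with ψ ∈ (0,π), ψ ∉ {π/2, 2π/3}. Suppose the cubic resonance coefficients satisfy z̃^{(20)} = ν₁, z̃^{(02)} = ν₁, z̃^{(11)} = -2ν₁, and z̃^{(21)} = 0. Then the Lyapunov coefficient formula LC = Re( -z̃^{(21)} ν̄₁ + |z̃^{(02)}|² (-4 + 2ν̄₁³)/(-2 + ν₁³ + ν̄₁³) + |z̃^{(11)}|² (-2ν̄₁ + ν̄₁²)/(-1 + ν̄₁)² + z̃^{(11)} z̃^{(20)} (2 - 6ν̄₁ + ν̄₁²)/(-1 + ν₁)² ) evaluates to LC = 4 cos ψ (1 + cos ψ)/((-1 + cos ψ)(1 + 2 cos ψ)²). -/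
open Complex Real ComplexConjugate

/-- The Lyapunov coefficient formula evaluated at the resonance coefficients
`z̃⁽²⁰⁾ = ν₁`, `z̃⁽⁰²⁾ = ν₁`, `z̃⁽¹¹⁾ = -2ν₁`, `z̃⁽²¹⁾ = 0` equals
`4 cos ψ (1 + cos ψ)/((-1 + cos ψ)(1 + 2 cos ψ)²)`. -/
theorem stmt4 (ψ : ℝ) (hψ : ψ ∈ Set.Ioo 0 π) (h2 : ψ ≠ π / 2) (h3 : ψ ≠ 2 * π / 3)
    (ν : ℂ) (hν : ν = Complex.exp ((ψ : ℂ) * Complex.I))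
    (z20 z02 z11 z21 : ℂ)
    (h20 : z20 = ν) (h02 : z02 = ν) (h11 : z11 = -2 * ν) (h21 : z21 = 0) :
    (-z21 * conj ν
      + z02 * conj z02 * (-4 + 2 * (conj ν) ^ 3) / (-2 + ν ^ 3 + (conj ν) ^ 3)
      + z11 * conj z11 * (-2 * conj ν + (conj ν) ^ 2) / (-1 + conj ν) ^ 2
      + z11 * z20 * (2 - 6 * conj ν + (conj ν) ^ 2) / (-1 + ν) ^ 2).re
    = 4 * Real.cos ψ * (1 + Real.cos ψ)
        / ((-1 + Real.cos ψ) * (1 + 2 * Real.cos ψ) ^ 2) := by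
  rw [h20, h02, h11, h21]
  set c := Real.cos ψ with hcdef
  set s := Real.sin ψ with hsdef
  have hνc : ν = (c:ℂ) + (s:ℂ) * Complex.I := by
    rw [hν, Complex.exp_mul_I, ← Complex.ofReal_cos, ← Complex.ofReal_sin]
  -- basic real facts
  have hs2 : s ^ 2 = 1 - c ^ 2 := by
    have := Real.sin_sq_add_cos_sq ψ; rw [← hcdef, ← hsdef] at this; linarith
  have hs0 : 0 < s := Real.sin_pos_of_pos_of_lt_pi hψ.1 hψ.2
  have hc1 : c ≠ 1 := by intro h; rw [h] at hs2; nlinarith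
  have hc2 : 1 + 2 * c ≠ 0 := by
    intro h
    have h23 : Real.cos (2 * π / 3) = -(1/2) := by
      have : 2 * π / 3 = π - π / 3 := by ring
      rw [this, Real.cos_pi_sub, Real.cos_pi_div_three]
    have : ψ = 2 * π / 3 := by
      apply Real.injOn_cos ⟨le_of_lt hψ.1, le_of_lt hψ.2⟩
        ⟨by positivity, by nlinarith [Real.pi_pos]⟩
      rw [h23, ← hcdef]; linarith
    exact h3 this
  have hcm1 : (2:ℝ) - 2 * c ≠ 0 := by
    intro h
    have : c = 1 := by linarith
    exact hc1 this
  -- complex versions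
  have hs2C : (s:ℂ) ^ 2 = 1 - (c:ℂ) ^ 2 := by exact_mod_cast congrArg (Complex.ofReal) hs2
  have hw : conj ν = (c:ℂ) - (s:ℂ) * Complex.I := by
    rw [hνc]; simp [Complex.ext_iff]
  -- rewrite the three denominators into real form
  have e1 : (-2 + ν ^ 3 + (conj ν) ^ 3 : ℂ) = ((2 * (c - 1) * (1 + 2 * c) ^ 2 : ℝ) : ℂ) := by
    rw [hw, hνc]; push_cast
    linear_combination 6 * (c:ℂ) * (s:ℂ)^2 * Complex.I_sq - 6 * (c:ℂ) * hs2C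
  have e34 : ((-1 + conj ν) * (-1 + ν) : ℂ) = (((2 - 2 * c : ℝ)) : ℂ) := by
    rw [hw, hνc]; push_cast
    linear_combination (-(s:ℂ)^2) * Complex.I_sq + hs2C
  have hν1 : (-1 + ν : ℂ) ≠ 0 := by
    rw [hνc]; intro h
    have := congrArg Complex.im h
    simp at this
    exact hs0.ne' this
  have hν1' : ((-1 + ν : ℂ))^2 ≠ 0 := pow_ne_zero _ hν1
  have hw1 : (-1 + conj ν : ℂ) ≠ 0 := by
    rw [hw]; intro h
    have := congrArg Complex.im h
    simp at this
    exact hs0.ne' this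
  have hw1' : ((-1 + conj ν : ℂ))^2 ≠ 0 := pow_ne_zero _ hw1
  -- realify term 3 denominator
  have e3 : ∀ X : ℂ, X / (-1 + conj ν) ^ 2
      = (X * (-1 + ν) ^ 2) / ((((2 - 2 * c : ℝ)) : ℂ))^2 := by
    intro X
    rw [← e34, mul_pow, mul_div_mul_right _ _ hν1']
  have e4 : ∀ X : ℂ, X / (-1 + ν) ^ 2
      = (X * (-1 + conj ν) ^ 2) / ((((2 - 2 * c : ℝ)) : ℂ))^2 := by
    intro X
    rw [← e34, mul_pow, mul_comm ((-1 + conj ν)^2), mul_div_mul_right _ _ hw1']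
  rw [e1, e3, e4, ← Complex.ofReal_pow]
  -- reduce numerators' real parts
  have hre : ∀ (z : ℂ) (r : ℝ), (z / (r:ℂ)).re = z.re / r := fun z r => Complex.div_ofReal_re z r
  rw [Complex.add_re, Complex.add_re, Complex.add_re, hre, hre, hre]
  have hn0 : (-0 * conj ν : ℂ).re = 0 := by simp
  have hn2 : (ν * conj ν * (-4 + 2 * (conj ν) ^ 3) : ℂ).re = -4 - 6*c + 8*c^3 := by
    rw [hw, hνc]
    simp only [Complex.add_re, Complex.add_im, Complex.sub_re, Complex.sub_im, Complex.mul_re,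
      Complex.mul_im, Complex.neg_re, Complex.neg_im, Complex.I_re, Complex.I_im,
      Complex.ofReal_re, Complex.ofReal_im, Complex.one_re, Complex.one_im,
      Complex.re_ofNat, Complex.im_ofNat, pow_two, pow_three]
    ring_nf
    linear_combination (-4 - 6*c - 6*c*s^2 + 2*c^3) * hs2
  have hn3 : ((-2*ν) * conj (-2*ν) * (-2 * conj ν + (conj ν) ^ 2) * (-1 + ν)^2 : ℂ).re
      = 16 - 24*c + 8*c^2 := by
    rw [hνc]
    simp only [map_mul, map_neg, map_ofNat, map_add, Complex.conj_ofReal, Complex.conj_I]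
    simp only [Complex.add_re, Complex.add_im, Complex.sub_re, Complex.sub_im, Complex.mul_re,
      Complex.mul_im, Complex.neg_re, Complex.neg_im, Complex.I_re, Complex.I_im,
      Complex.ofReal_re, Complex.ofReal_im, Complex.one_re, Complex.one_im,
      Complex.re_ofNat, Complex.im_ofNat, pow_two, pow_three]
    ring_nf
    linear_combination (16 + 16*s^2 + 4*s^4 - 24*c - 16*c*s^2 + 24*c^2 + 8*c^2*s^2 - 16*c^3 + 4*c^4) * hs2
  have hn4 : ((-2*ν) * ν * (2 - 6 * conj ν + (conj ν) ^ 2) * (-1 + conj ν)^2 : ℂ).re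
      = -24 + 36*c - 12*c^2 := by
    rw [hw, hνc]
    simp only [Complex.add_re, Complex.add_im, Complex.sub_re, Complex.sub_im, Complex.mul_re,
      Complex.mul_im, Complex.neg_re, Complex.neg_im, Complex.I_re, Complex.I_im,
      Complex.ofReal_re, Complex.ofReal_im, Complex.one_re, Complex.one_im,
      Complex.re_ofNat, Complex.im_ofNat, pow_two, pow_three]
    ring_nf
    linear_combination (-24 - 28*s^2 + 2*s^4 + 36*c + 16*c*s^2 - 32*c^2 + 16*c^3 - 2*c^4) * hs2
  rw [hn0, hn2, hn3, hn4]
  have hd1 : 2 * (c - 1) * (1 + 2 * c) ^ 2 ≠ 0 := by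
    apply mul_ne_zero (mul_ne_zero two_ne_zero (sub_ne_zero.mpr hc1)) (pow_ne_zero _ hc2)
  have hm1c : -1 + c ≠ 0 := by intro h; exact hc1 (by linarith)
  have hc2' : 1 + c * 2 ≠ 0 := by rwa [mul_comm]
  field_simp
  ring
end

section
/- Let U ⊆ ℝⁿ be open and let G_k^{(j)}: U → ℝ and H_k^{(j)}: U × ℝᵐ → ℝ (for j = 1,…,m, k ≥ 1) be C^r functions such that sup |H_k^{(j)}| → 0 and sup |∂_{y_i} H_k^{(j)}| → 0 as k → ∞ for all i, j. Then there exists κ > 0 such that for all k > κ, the system y_j = G_k^{(j)}(x) + H_k^{(j)}(x, y₁,…,y_m), j = 1,…,m, admits C^r solutions y_j = G_k^{(j)}(x) + I_k^{(j)}(x) with |I_k^{(j)}(x)| ≤ C · sup_{(x,y)} |H_k^{(j)}(x,y)| for a constant C independent of k, x, j. -/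
open Set

lemma aux_opbound {m : ℕ} (L : (Fin m → ℝ) →L[ℝ] ℝ) {ε : ℝ}
    (h : ∀ i, |L (Pi.single i 1)| ≤ ε) : ∀ v, |L v| ≤ (m * ε) * ‖v‖ := by
  intro v
  have hv : v = ∑ i, (v i : ℝ) • (Pi.single i (1:ℝ) : Fin m → ℝ) := by
    funext j
    simp [Finset.sum_apply, Pi.single_apply]
  calc |L v| = |∑ i, v i * L (Pi.single i 1)| := by
        conv_lhs => rw [hv]
        rw [map_sum]; simp [smul_eq_mul]
    _ ≤ ∑ i, |v i * L (Pi.single i 1)| := Finset.abs_sum_le_sum_abs _ _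
    _ ≤ ∑ _i : Fin m, ‖v‖ * ε := by
        apply Finset.sum_le_sum
        intro i _
        rw [abs_mul]
        exact mul_le_mul (by simpa using norm_le_pi_norm v i) (h i) (abs_nonneg _)
          (norm_nonneg _)
    _ = (m * ε) * ‖v‖ := by
        simp [Finset.sum_const, Finset.card_univ]
        ring

lemma aux_lip {m : ℕ} {f : (Fin m → ℝ) → ℝ} (hf : Differentiable ℝ f) {ε : ℝ}
    (h : ∀ y i, |fderiv ℝ f y (Pi.single i 1)| ≤ ε) (hε : 0 ≤ ε) :
    ∀ w w', |f w - f w'| ≤ (m * ε) * ‖w - w'‖ := by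
  intro w w'
  have hbd : ∀ x ∈ (univ : Set (Fin m → ℝ)), ‖fderiv ℝ f x‖ ≤ m * ε := fun x _ =>
    ContinuousLinearMap.opNorm_le_bound _ (by positivity) fun v => by
      simpa [Real.norm_eq_abs] using aux_opbound (fderiv ℝ f x) (h x) v
  have := Convex.norm_image_sub_le_of_norm_fderiv_le (f := f) (C := m * ε) (s := univ)
    (fun x _ => hf x) hbd convex_univ (mem_univ w') (mem_univ w)
  simpa [Real.norm_eq_abs] using this

/-- Solving the system `y_j = G_k^{(j)}(x) + H_k^{(j)}(x, y)` for large `k`,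
with `C^r` solutions `y_j = G_k^{(j)}(x) + I_k^{(j)}(x)` bounded by `C · sup|H_k^{(j)}|`. -/
theorem stmt8 (n m : ℕ) (r : ℕ∞) (hr : 1 ≤ r) (U : Set (Fin n → ℝ)) (hU : IsOpen U)
    (G : ℕ → Fin m → (Fin n → ℝ) → ℝ)
    (H : ℕ → Fin m → (Fin n → ℝ) → (Fin m → ℝ) → ℝ)
    (hG : ∀ k j, ContDiffOn ℝ r (G k j) U)
    (hH : ∀ k j, ContDiff ℝ r (fun p : (Fin n → ℝ) × (Fin m → ℝ) => H k j p.1 p.2))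
    (hH0 : ∀ ε : ℝ, 0 < ε → ∃ K : ℕ, ∀ k ≥ K, ∀ j : Fin m, ∀ x ∈ U,
      ∀ y : Fin m → ℝ, |H k j x y| ≤ ε)
    (hHy : ∀ ε : ℝ, 0 < ε → ∃ K : ℕ, ∀ k ≥ K, ∀ j i : Fin m, ∀ x ∈ U,
      ∀ y : Fin m → ℝ, |fderiv ℝ (H k j x) y (Pi.single i 1)| ≤ ε) :
    ∃ κ : ℕ, ∃ C : ℝ, 0 < C ∧ ∃ I : ℕ → Fin m → (Fin n → ℝ) → ℝ,
      ∀ k : ℕ, κ < k →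
        (∀ j, ContDiffOn ℝ r (I k j) U) ∧
        (∀ x ∈ U, ∀ j : Fin m,
          G k j x + I k j x = G k j x + H k j x (fun j' => G k j' x + I k j' x)) ∧
        (∀ j : Fin m, ∀ M : ℝ,
          (∀ x ∈ U, ∀ y : Fin m → ℝ, |H k j x y| ≤ M) →
          ∀ x ∈ U, |I k j x| ≤ C * M) := by
  classical
  have hr' : (r : WithTop ℕ∞) ≠ 0 := by
    have h1 : (1 : WithTop ℕ∞) ≤ (r : WithTop ℕ∞) := by exact_mod_cast hr
    exact (lt_of_lt_of_le zero_lt_one h1).ne'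
  set ε : ℝ := (2 * ((m : ℝ) + 1))⁻¹ with hεdef
  have hε : 0 < ε := by positivity
  have hμ : (m : ℝ) * ε ≤ 1 / 2 := by
    have h2 : (0:ℝ) < 2*((m:ℝ)+1) := by positivity
    rw [hεdef, inv_eq_one_div, mul_one_div, div_le_div_iff₀ h2 two_pos]
    push_cast
    linarith
  obtain ⟨K, hK⟩ := hHy ε hε
  have hcur : ∀ k j (x : Fin n → ℝ), ContDiff ℝ r (fun y => H k j x y) := fun k j x =>
    (hH k j).comp (contDiff_const.prodMk contDiff_id)
  have hdiff : ∀ k j x, Differentiable ℝ (H k j x) := fun k j x =>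
    (hcur k j x).differentiable hr'
  have hlipH : ∀ k, K ≤ k → ∀ j, ∀ x ∈ U, ∀ w w',
      |H k j x w - H k j x w'| ≤ 1 / 2 * ‖w - w'‖ := by
    intro k hk j x hx w w'
    refine le_trans (aux_lip (hdiff k j x) (fun y i => hK k hk j i x hx y) hε.le w w') ?_
    exact mul_le_mul_of_nonneg_right hμ (norm_nonneg _)
  set T : ℕ → (Fin n → ℝ) → (Fin m → ℝ) → (Fin m → ℝ) :=
    fun k x w j => G k j x + H k j x w with hT
  have hcontr : ∀ k, K ≤ k → ∀ x ∈ U, ContractingWith (1/2 : NNReal) (T k x) := by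
    intro k hk x hx
    refine ⟨by rw [← NNReal.coe_lt_coe]; norm_num, LipschitzWith.of_dist_le_mul fun w w' => ?_⟩
    have hc : ((1/2 : NNReal) : ℝ) = 1/2 := by norm_num
    rw [hc]
    refine (dist_pi_le_iff (by positivity)).2 fun j => ?_
    rw [Real.dist_eq]
    have : T k x w j - T k x w' j = H k j x w - H k j x w' := by simp [hT]
    rw [this]
    calc |H k j x w - H k j x w'| ≤ 1/2 * ‖w - w'‖ := hlipH k hk j x hx w w'
      _ = 1/2 * dist w w' := by rw [dist_eq_norm]
  set W : ℕ → (Fin n → ℝ) → (Fin m → ℝ) := fun k x =>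
    if h : ContractingWith (1/2 : NNReal) (T k x) then ContractingWith.fixedPoint (T k x) h
    else 0 with hW
  have hWfix : ∀ k, K ≤ k → ∀ x ∈ U, T k x (W k x) = W k x := by
    intro k hk x hx
    rw [hW]
    simp only [dif_pos (hcontr k hk x hx)]
    exact (hcontr k hk x hx).fixedPoint_isFixedPt
  refine ⟨K, 1, one_pos, fun k j x => W k x j - G k j x, fun k hk => ?_⟩
  have hk' : K ≤ k := hk.le
  refine ⟨?_, ?_, ?_⟩
  · -- smoothness
    intro j
    have hWcd : ∀ x₀ ∈ U, ContDiffAt ℝ r (W k) x₀ := by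
      intro x₀ hx₀
      have hx₀U : U ∈ nhds x₀ := hU.mem_nhds hx₀
      set w₀ : Fin m → ℝ := W k x₀ with hw₀
      have hfix₀ : T k x₀ w₀ = w₀ := hWfix k hk' x₀ hx₀
      set Φ : ((Fin n → ℝ) × (Fin m → ℝ)) → ((Fin n → ℝ) × (Fin m → ℝ)) :=
        fun p => (p.1, fun j' => p.2 j' - G k j' p.1 - H k j' p.1 p.2) with hΦdef
      have hΦ : ContDiffAt ℝ r Φ (x₀, w₀) := by
        apply ContDiffAt.prodMk
        · exact contDiffAt_fst
        · rw [contDiffAt_pi]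
          intro j'
          have hsnd : ContDiffAt ℝ r
              (fun p : (Fin n → ℝ) × (Fin m → ℝ) => p.2 j') (x₀, w₀) :=
            (((ContinuousLinearMap.proj j').comp
              (ContinuousLinearMap.snd ℝ (Fin n → ℝ) (Fin m → ℝ))).contDiff).contDiffAt
          have hGc : ContDiffAt ℝ r
              (fun p : (Fin n → ℝ) × (Fin m → ℝ) => G k j' p.1) (x₀, w₀) :=
            ((hG k j').contDiffAt hx₀U).comp (x₀, w₀) contDiffAt_fst
          exact (hsnd.sub hGc).sub (hH k j').contDiffAt
      have hΦdiff : HasFDerivAt Φ (fderiv ℝ Φ (x₀, w₀)) (x₀, w₀) :=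
        (hΦ.differentiableAt hr').hasFDerivAt
      set A := fderiv ℝ Φ (x₀, w₀) with hAdef
      have hfst : (ContinuousLinearMap.fst ℝ (Fin n → ℝ) (Fin m → ℝ)).comp A
          = ContinuousLinearMap.fst ℝ (Fin n → ℝ) (Fin m → ℝ) := by
        have d1 : HasFDerivAt (fun p : (Fin n → ℝ) × (Fin m → ℝ) => (Φ p).1)
            ((ContinuousLinearMap.fst ℝ (Fin n → ℝ) (Fin m → ℝ)).comp A) (x₀, w₀) :=
          hΦdiff.fst
        have d2 : HasFDerivAt (fun p : (Fin n → ℝ) × (Fin m → ℝ) => (Φ p).1)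
            (ContinuousLinearMap.fst ℝ (Fin n → ℝ) (Fin m → ℝ)) (x₀, w₀) :=
          (ContinuousLinearMap.fst ℝ (Fin n → ℝ) (Fin m → ℝ)).hasFDerivAt
        exact d1.unique d2
      have hsnd' : ∀ (j' : Fin m) (v : Fin m → ℝ),
          (A (0, v)).2 j' = v j' - fderiv ℝ (H k j' x₀) w₀ v := by
        intro j' v
        have hinr : HasFDerivAt (fun y : Fin m → ℝ => ((x₀ : Fin n → ℝ), y))
            ((0 : (Fin m → ℝ) →L[ℝ] (Fin n → ℝ)).prod (ContinuousLinearMap.id ℝ (Fin m → ℝ)))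
            w₀ := (hasFDerivAt_const x₀ w₀).prodMk (hasFDerivAt_id w₀)
        have dA2 : HasFDerivAt (fun y : Fin m → ℝ => (Φ (x₀, y)).2 j')
            (((ContinuousLinearMap.proj j').comp
              (ContinuousLinearMap.snd ℝ (Fin n → ℝ) (Fin m → ℝ))).comp
              (A.comp ((0 : (Fin m → ℝ) →L[ℝ] (Fin n → ℝ)).prod
                (ContinuousLinearMap.id ℝ (Fin m → ℝ))))) w₀ :=
          ((ContinuousLinearMap.proj j').comp
            (ContinuousLinearMap.snd ℝ (Fin n → ℝ) (Fin m → ℝ))).hasFDerivAt.comp w₀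
            (hΦdiff.comp w₀ hinr)
        have dB : HasFDerivAt (fun y : Fin m → ℝ => (Φ (x₀, y)).2 j')
            ((ContinuousLinearMap.proj j') - fderiv ℝ (H k j' x₀) w₀) w₀ := by
          have b0 : HasFDerivAt (fun y : Fin m → ℝ => y j')
              (ContinuousLinearMap.proj j' : (Fin m → ℝ) →L[ℝ] ℝ) w₀ :=
            (ContinuousLinearMap.proj j' : (Fin m → ℝ) →L[ℝ] ℝ).hasFDerivAt
          have b1 : HasFDerivAt (fun y : Fin m → ℝ => y j' - G k j' x₀)
              (ContinuousLinearMap.proj j' : (Fin m → ℝ) →L[ℝ] ℝ) w₀ :=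
            b0.sub_const (G k j' x₀)
          exact b1.sub ((hdiff k j' x₀) w₀).hasFDerivAt
        have := dA2.unique dB
        have h5 := congrArg (fun (L : (Fin m → ℝ) →L[ℝ] ℝ) => L v) this
        simpa using h5
      have hDb : ∀ (j' : Fin m) (v : Fin m → ℝ),
          |fderiv ℝ (H k j' x₀) w₀ v| ≤ ((m : ℝ) * ε) * ‖v‖ := fun j' =>
        aux_opbound (fderiv ℝ (H k j' x₀) w₀) (fun i => hK k hk' j' i x₀ hx₀ w₀)
      have hAinj : Function.Injective A := by
        intro p q hpq
        rw [← sub_eq_zero]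
        have hz : A (p - q) = 0 := by rw [map_sub, hpq, sub_self]
        set d := p - q with hd
        have h1 : d.1 = 0 := by
          have e1 := congrArg (fun (L : ((Fin n → ℝ) × (Fin m → ℝ)) →L[ℝ] (Fin n → ℝ)) => L d)
            hfst
          simp only [ContinuousLinearMap.comp_apply, ContinuousLinearMap.coe_fst'] at e1
          rw [hz] at e1
          simpa using e1.symm
        have hd0 : d = ((0 : Fin n → ℝ), d.2) := by
          rw [← h1]
        have h2 : d.2 = 0 := by
          have hnorm : ‖d.2‖ ≤ 1/2 * ‖d.2‖ := by
            refine (pi_norm_le_iff_of_nonneg (by positivity)).2 fun j' => ?_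
            have e2 : (A (0, d.2)).2 j' = d.2 j' - fderiv ℝ (H k j' x₀) w₀ d.2 := hsnd' j' d.2
            rw [← hd0, hz] at e2
            have e3 : d.2 j' = fderiv ℝ (H k j' x₀) w₀ d.2 := by
              have := congrFun (congrArg Prod.snd (rfl : (0 : (Fin n → ℝ) × (Fin m → ℝ)) = 0)) j'
              simp only [Prod.snd_zero, Pi.zero_apply] at e2
              linarith [e2]
            rw [Real.norm_eq_abs, e3]
            calc |fderiv ℝ (H k j' x₀) w₀ d.2| ≤ ((m:ℝ) * ε) * ‖d.2‖ := hDb j' d.2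
              _ ≤ 1/2 * ‖d.2‖ := mul_le_mul_of_nonneg_right hμ (norm_nonneg _)
          have : ‖d.2‖ = 0 := le_antisymm (by linarith) (norm_nonneg _)
          simpa using this
        rw [hd0, h2]
        rfl
      obtain ⟨e, he⟩ : ∃ e : ((Fin n → ℝ) × (Fin m → ℝ)) ≃L[ℝ] ((Fin n → ℝ) × (Fin m → ℝ)),
          (e : ((Fin n → ℝ) × (Fin m → ℝ)) →L[ℝ] ((Fin n → ℝ) × (Fin m → ℝ))) = A := by
        refine ⟨(LinearEquiv.ofInjectiveEndo (A : ((Fin n → ℝ) × (Fin m → ℝ)) →ₗ[ℝ]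
          ((Fin n → ℝ) × (Fin m → ℝ))) hAinj).toContinuousLinearEquiv, ?_⟩
        exact ContinuousLinearMap.ext fun p => rfl
      have hΦ' : HasFDerivAt Φ
          (e : ((Fin n → ℝ) × (Fin m → ℝ)) →L[ℝ] ((Fin n → ℝ) × (Fin m → ℝ))) (x₀, w₀) := by
        rw [he]; exact hΦdiff
      have hloc := hΦ.to_localInverse hΦ' hr'
      have himage : Φ (x₀, w₀) = (x₀, (0 : Fin m → ℝ)) := by
        refine Prod.ext rfl ?_
        show (fun j' => w₀ j' - G k j' x₀ - H k j' x₀ w₀) = 0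
        funext j'
        have h6 := congrFun hfix₀ j'
        simp only [hT] at h6
        simp only [Pi.zero_apply]
        linarith
      set inv := hΦ.localInverse hΦ' hr' with hinvdef
      have hinvcd : ContDiffAt ℝ r inv (x₀, (0 : Fin m → ℝ)) := by
        rw [← himage]; exact hloc
      have hri : ∀ᶠ p in nhds ((x₀ : Fin n → ℝ), (0 : Fin m → ℝ)), Φ (inv p) = p := by
        rw [← himage]
        exact (hΦ.hasStrictFDerivAt' hΦ' hr').eventually_right_inverse
      have hxmap : ContinuousAt (fun x : Fin n → ℝ => ((x, (0 : Fin m → ℝ)) :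
          (Fin n → ℝ) × (Fin m → ℝ))) x₀ :=
        (continuous_id.prodMk continuous_const).continuousAt
      have heq : W k =ᶠ[nhds x₀] fun x => (inv (x, 0)).2 := by
        filter_upwards [hxmap.eventually hri, hU.eventually_mem hx₀] with x hxri hxU
        have hp1 : (inv (x, (0 : Fin m → ℝ))).1 = x := congrArg Prod.fst hxri
        have hfp : T k x ((inv (x, 0)).2) = (inv (x, 0)).2 := by
          funext j'
          have h8 := congrFun (congrArg Prod.snd hxri) j'
          simp only [hΦdef] at h8
          rw [hp1] at h8
          simp only [Pi.zero_apply] at h8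
          show G k j' x + H k j' x (inv (x, 0)).2 = (inv (x, 0)).2 j'
          linarith [h8]
        have h9 := (hcontr k hk' x hxU).fixedPoint_unique hfp
        show W k x = _
        rw [hW]
        simp only [dif_pos (hcontr k hk' x hxU)]
        exact h9.symm
      have hg : ContDiffAt ℝ r (fun x : Fin n → ℝ => (inv (x, 0)).2) x₀ := by
        have h1 : ContDiffAt ℝ r (fun x : Fin n → ℝ => ((x, (0 : Fin m → ℝ)) :
            (Fin n → ℝ) × (Fin m → ℝ))) x₀ := (contDiff_id.prodMk contDiff_const).contDiffAt
        exact contDiff_snd.contDiffAt.comp x₀ (hinvcd.comp x₀ h1)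
      exact hg.congr_of_eventuallyEq heq
    intro x hx
    exact (((ContinuousLinearMap.proj j).contDiff.contDiffAt.comp x
      (hWcd x hx)).contDiffWithinAt).sub ((hG k j) x hx)
  · intro x hx j
    have h1 : (fun j' => G k j' x + (W k x j' - G k j' x)) = W k x := by funext j'; ring
    rw [h1]
    have h2 := congrFun (hWfix k hk' x hx) j
    simp only [hT] at h2
    show G k j x + (W k x j - G k j x) = G k j x + H k j x (W k x)
    linarith
  · intro j M hM x hx
    have h2 := congrFun (hWfix k hk' x hx) j
    simp only [hT] at h2
    have h3 : W k x j - G k j x = H k j x (W k x) := by linarith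
    show |W k x j - G k j x| ≤ 1 * M
    rw [h3, one_mul]
    exact hM x hx _
end
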